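/- Fix p0 ∈ (0,1) and λ ∈ [0,1) with λ < min( p0/(1−p0), (1−p0)/p0 ). Let (a*, b*) be the unique global minimizer on ℝ² of L_C(a,b) = p0·( ((1+λ)/2)·s(b) + ((1−λ)/2)·s(−b) ) + (1−p0)·( ((1+λ)/2)·s(−a) + ((1−λ)/2)·s(a) ) + p0·s(a) + (1−p0)·s(−b). Then a* < 0 < b*, and consequently E(a*, b*) = 0; that is, the CCAT Bayes optimal classifier classifies both points correctly and achieves zero error, matching the Bayes error of the problem. -/
import Mathlib


noncomputable def s (x : ℝ) : ℝ := Real.log (1 + Real.exp x)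

noncomputable def LC (p0 lam a b : ℝ) : ℝ :=
  p0 * (((1 + lam) / 2) * s b + ((1 - lam) / 2) * s (-b)) +
    (1 - p0) * (((1 + lam) / 2) * s (-a) + ((1 - lam) / 2) * s a) +
    p0 * s a + (1 - p0) * s (-b)

noncomputable def E (p0 a b : ℝ) : ℝ :=
  p0 * (if a ≥ 0 then 1 else 0) + (1 - p0) * (if b ≤ 0 then 1 else 0)

lemma s_neg (x : ℝ) : s (-x) = s x - x := by
  unfold s
  have hx : (0:ℝ) < Real.exp x := Real.exp_pos x
  have h1 : (0:ℝ) < 1 + Real.exp x := by linarith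
  have : 1 + Real.exp (-x) = (1 + Real.exp x) * Real.exp (-x) := by
    rw [mul_comm, Real.exp_neg]
    field_simp
    ring
  rw [this, Real.log_mul (by positivity) (by positivity), Real.log_exp]
  ring

lemma hasDerivAt_s (x : ℝ) :
    HasDerivAt s (Real.exp x / (1 + Real.exp x)) x := by
  have h1 : (0:ℝ) < 1 + Real.exp x := by positivity
  have h : HasDerivAt (fun y : ℝ => 1 + Real.exp y) (Real.exp x) x :=
    (Real.hasDerivAt_exp x).const_add 1
  exact h.log (ne_of_gt h1)

/-- If `s · - c * ·` has a global min at `t`, then `exp t / (1+exp t) = c`. -/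
lemma sigma_eq (c t : ℝ) (h : ∀ x : ℝ, s t - c * t ≤ s x - c * x) :
    Real.exp t / (1 + Real.exp t) = c := by
  have hd : HasDerivAt (fun x => s x - c * x)
      (Real.exp t / (1 + Real.exp t) - c) t :=
    ((hasDerivAt_s t).sub ((hasDerivAt_id t).const_mul c)).congr_deriv (by ring)
  have hloc : IsLocalMin (fun x => s x - c * x) t :=
    Filter.Eventually.of_forall (fun x => h x)
  have := hloc.hasDerivAt_eq_zero hd
  linarith

theorem ccat_zero_error (p0 lam : ℝ) (hp0 : 0 < p0) (hp1 : p0 < 1)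
    (hlam0 : 0 ≤ lam) (hlam1 : lam < 1)
    (hlam : lam < min (p0 / (1 - p0)) ((1 - p0) / p0))
    (astar bstar : ℝ)
    (hmin : ∀ a b : ℝ, LC p0 lam astar bstar ≤ LC p0 lam a b)
    (huniq : ∀ a b : ℝ, LC p0 lam a b = LC p0 lam astar bstar → (a, b) = (astar, bstar)) :
    astar < 0 ∧ 0 < bstar ∧ E p0 astar bstar = 0 := by
  set ca := (1 - p0) * (1 + lam) / 2 with hca
  set cb := p0 * (1 - lam) / 2 + (1 - p0) with hcb
  have hLC : ∀ a b : ℝ, LC p0 lam a b = (s a - ca * a) + (s b - cb * b) := by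
    intro a b
    unfold LC
    rw [s_neg a, s_neg b]
    ring
  have hp0' : (0:ℝ) < 1 - p0 := by linarith
  have hlam_a : lam < p0 / (1 - p0) := lt_of_lt_of_le hlam (min_le_left _ _)
  have hlam_b : lam < (1 - p0) / p0 := lt_of_lt_of_le hlam (min_le_right _ _)
  have hca_lt : ca < 1 / 2 := by
    rw [hca]
    have : lam * (1 - p0) < p0 := by
      rw [div_eq_mul_inv] at hlam_a
      calc lam * (1 - p0) < p0 * (1 - p0)⁻¹ * (1 - p0) := by
            apply mul_lt_mul_of_pos_right hlam_a hp0'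
        _ = p0 := by field_simp
    nlinarith
  have hcb_gt : 1 / 2 < cb := by
    rw [hcb]
    have : lam * p0 < 1 - p0 := by
      calc lam * p0 < (1 - p0) / p0 * p0 := mul_lt_mul_of_pos_right hlam_b hp0
        _ = 1 - p0 := by field_simp
    nlinarith
  -- global min in each coordinate separately
  have hmina : ∀ x : ℝ, s astar - ca * astar ≤ s x - ca * x := by
    intro x
    have := hmin x bstar
    rw [hLC, hLC] at this
    linarith
  have hminb : ∀ x : ℝ, s bstar - cb * bstar ≤ s x - cb * x := by
    intro x
    have := hmin astar x
    rw [hLC, hLC] at this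
    linarith
  have ha := sigma_eq ca astar hmina
  have hb := sigma_eq cb bstar hminb
  have hea : (0:ℝ) < Real.exp astar := Real.exp_pos _
  have heb : (0:ℝ) < Real.exp bstar := Real.exp_pos _
  have hastar : astar < 0 := by
    rw [← Real.exp_lt_one_iff]
    have hden : (0:ℝ) < 1 + Real.exp astar := by linarith
    have : Real.exp astar / (1 + Real.exp astar) < 1 / 2 := ha ▸ hca_lt
    rw [div_lt_div_iff₀ hden (by norm_num)] at this
    linarith
  have hbstar : 0 < bstar := by
    rw [← Real.one_lt_exp_iff]
    have hden : (0:ℝ) < 1 + Real.exp bstar := by linarith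
    have : 1 / 2 < Real.exp bstar / (1 + Real.exp bstar) := hb ▸ hcb_gt
    rw [div_lt_div_iff₀ (by norm_num) hden] at this
    linarith
  refine ⟨hastar, hbstar, ?_⟩
  unfold E
  rw [if_neg (by linarith), if_neg (by linarith)]
  ring
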